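/- Let S = (p,q,r) be a triple of positive reals with 0 < r < 2, and define f_{-1} = p, f_0 = q, f_{n+1} = r·f_n - f_{n-1}. Then there exists n ≥ 0 with f_n < 0. -/

import Mathlib

/-- `f n` corresponds to `f_{n-1}`, so `f 0 = f_{-1} = p`, `f 1 = f_0 = q`. -/
theorem stmt_6 (p q r : ℝ) (hp : 0 < p) (hq : 0 < q) (hr0 : 0 < r) (hr2 : r < 2)
    (f : ℕ → ℝ) (hf0 : f 0 = p) (hf1 : f 1 = q)
    (hfrec : ∀ n, f (n + 2) = r * f (n + 1) - f n) :
    ∃ n, f (n + 1) < 0 := by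
  set θ := Real.arccos (r / 2) with hθdef
  have hr2' : r / 2 < 1 := by linarith
  have hr0' : 0 < r / 2 := by linarith
  have hθpos : 0 < θ := Real.arccos_pos.mpr hr2'
  have hθlt : θ < Real.pi / 2 := by
    have := Real.arccos_lt_pi_div_two.mpr hr0'
    simpa [hθdef] using this
  have hcos : Real.cos θ = r / 2 := Real.cos_arccos (by linarith) (by linarith)
  have hsinpos : 0 < Real.sin θ :=
    Real.sin_pos_of_pos_of_lt_pi hθpos (by linarith [Real.pi_pos])
  have hsinne : Real.sin θ ≠ 0 := ne_of_gt hsinpos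
  have hr : r = 2 * Real.cos θ := by rw [hcos]; ring
  set g : ℕ → ℝ := fun n =>
    (q * Real.sin ((n : ℝ) * θ) - p * Real.sin (((n : ℝ) - 1) * θ)) / Real.sin θ with hg
  have trig : ∀ x : ℝ, Real.sin (x + θ) + Real.sin (x - θ) = 2 * Real.cos θ * Real.sin x := by
    intro x; rw [Real.sin_add, Real.sin_sub]; ring
  have key : ∀ n, f n = g n ∧ f (n + 1) = g (n + 1) := by
    intro n
    induction n with
    | zero =>
      constructor
      · simp only [hg, hf0]
        rw [show ((0:ℕ):ℝ) * θ = 0 by push_cast; ring,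
            show (((0:ℕ):ℝ) - 1) * θ = -θ by push_cast; ring]
        rw [Real.sin_zero, Real.sin_neg]
        field_simp
        ring
      · simp only [hg, hf1]
        rw [show ((1:ℕ):ℝ) * θ = θ by push_cast; ring,
            show (((1:ℕ):ℝ) - 1) * θ = 0 by push_cast; ring]
        rw [Real.sin_zero]
        field_simp
        ring
    | succ n ih =>
      refine ⟨ih.2, ?_⟩
      have hrec := hfrec n
      have s2 : Real.sin (((n : ℝ) + 2) * θ) + Real.sin (((n : ℝ)) * θ)
          = 2 * Real.cos θ * Real.sin (((n : ℝ) + 1) * θ) := by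
        have h := trig (((n : ℝ) + 1) * θ)
        rw [show ((n : ℝ) + 1) * θ + θ = ((n : ℝ) + 2) * θ by ring,
            show ((n : ℝ) + 1) * θ - θ = (n : ℝ) * θ by ring] at h
        exact h
      have s1 : Real.sin (((n : ℝ) + 1) * θ) + Real.sin (((n : ℝ) - 1) * θ)
          = 2 * Real.cos θ * Real.sin ((n : ℝ) * θ) := by
        have h := trig ((n : ℝ) * θ)
        rw [show (n : ℝ) * θ + θ = ((n : ℝ) + 1) * θ by ring,
            show (n : ℝ) * θ - θ = ((n : ℝ) - 1) * θ by ring] at h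
        exact h
      rw [ih.1, ih.2, hr] at hrec
      simp only [hg] at hrec ⊢
      push_cast at hrec ⊢
      rw [show ((n : ℝ) + 1 + 1) = (n : ℝ) + 2 by ring,
          show ((n : ℝ) + 2 - 1) = (n : ℝ) + 1 by ring]
      rw [show ((n : ℝ) + 1 - 1) = (n : ℝ) by ring] at hrec
      rw [hrec]
      field_simp
      rw [show θ * ((n:ℝ) - 1) = ((n:ℝ) - 1) * θ by ring,
          show θ * ((n:ℝ) + 2) = ((n:ℝ) + 2) * θ by ring]
      linear_combination (-q) * s2 + p * s1
  -- choose n = ⌊π / θ⌋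
  set m := Nat.floor (Real.pi / θ) with hm
  have hπθpos : 0 < Real.pi / θ := div_pos Real.pi_pos hθpos
  have hml : (m : ℝ) * θ ≤ Real.pi := by
    have := Nat.floor_le (le_of_lt hπθpos)
    calc (m : ℝ) * θ ≤ (Real.pi / θ) * θ := by
          exact mul_le_mul_of_nonneg_right this (le_of_lt hθpos)
      _ = Real.pi := by field_simp
  have hmu : Real.pi < ((m : ℝ) + 1) * θ := by
    have := Nat.lt_floor_add_one (Real.pi / θ)
    have h2 : Real.pi / θ * θ < ((m : ℝ) + 1) * θ :=
      mul_lt_mul_of_pos_right this hθpos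
    calc Real.pi = Real.pi / θ * θ := by field_simp
      _ < _ := h2
  refine ⟨m, ?_⟩
  rw [(key m).2]
  simp only [hg]
  push_cast
  rw [show ((m : ℝ) + 1 - 1) = (m : ℝ) by ring]
  apply div_neg_of_neg_of_pos _ hsinpos
  have hsm : 0 ≤ Real.sin ((m : ℝ) * θ) :=
    Real.sin_nonneg_of_nonneg_of_le_pi (by positivity) hml
  have hsm1 : Real.sin (((m : ℝ) + 1) * θ) < 0 := by
    have h1 : ((m : ℝ) + 1) * θ - Real.pi < Real.pi := by
      nlinarith [Real.pi_pos]
    have h0 : 0 < ((m : ℝ) + 1) * θ - Real.pi := by linarith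
    have := Real.sin_pos_of_pos_of_lt_pi h0 h1
    rw [Real.sin_sub_pi] at this
    linarith
  nlinarith
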